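/- arXiv:1905.09705 — 10 statements merged into one kernel-verified Lean document; each statement's English description precedes it below -/
import Mathlib

section
/- Let V be a real vector space equipped with a seminorm N (so N(x+y) ≤ N(x)+N(y) and N(c·x) = |c|·N(x)), let L : V → V be any map, and let Δt_FE ≥ 0. Assume the forward Euler method is strongly stable with respect to N: N(v + τ·L(v)) ≤ N(v) for every v ∈ V and every τ with 0 ≤ τ ≤ Δt_FE. Let s ≥ 1 and let real coefficients α_{iν}, β_{iν} ≥ 0 (for 1 ≤ i ≤ s, 0 ≤ ν ≤ i−1) satisfy the consistency condition Σ_{ν=0}^{i−1} α_{iν} = 1 for every i. Let Δt ≥ 0 satisfy Δt·β_{iν} ≤ Δt_FE·α_{iν} for all i, ν (i.e. the modified CFL condition Δt ≤ 𝒞·Δt_FE with SSP coefficient 𝒞 = min_{i,ν} α_{iν}/β_{iν}). Then the SSP-RK stages defined by U^(0) = u and U^(i) = Σ_{ν=0}^{i−1} ( α_{iν}·U^(ν) + Δt·β_{iν}·L(U^(ν)) ) for i = 1,…,s satisfy N(U^(i)) ≤ N(u) for every 0 ≤ i ≤ s; in particular N(U^(s)) ≤ N(u). -/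
/-- SSP-RK strong stability: if forward Euler is strongly stable w.r.t. a seminorm `N`
under the step restriction `τ ≤ ΔtFE`, and the Shu–Osher coefficients are nonnegative
with row sums one, then under the modified CFL condition `Δt * β i ν ≤ ΔtFE * α i ν`
every Runge–Kutta stage satisfies `N (U i) ≤ N u`. -/
theorem ssp_rk_strong_stability
    {V : Type*} [AddCommGroup V] [Module ℝ V]
    (N : V → ℝ)
    (hN_add : ∀ x y : V, N (x + y) ≤ N x + N y)
    (hN_smul : ∀ (c : ℝ) (x : V), N (c • x) = |c| * N x)
    (L : V → V) (ΔtFE : ℝ) (hΔtFE : 0 ≤ ΔtFE)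
    (hFE : ∀ (v : V) (τ : ℝ), 0 ≤ τ → τ ≤ ΔtFE → N (v + τ • L v) ≤ N v)
    (s : ℕ) (hs : 1 ≤ s)
    (α β : ℕ → ℕ → ℝ)
    (hα : ∀ i ν, 1 ≤ i → i ≤ s → ν < i → 0 ≤ α i ν)
    (hβ : ∀ i ν, 1 ≤ i → i ≤ s → ν < i → 0 ≤ β i ν)
    (hconsist : ∀ i, 1 ≤ i → i ≤ s → (∑ ν ∈ Finset.range i, α i ν) = 1)
    (Δt : ℝ) (hΔt : 0 ≤ Δt)
    (hCFL : ∀ i ν, 1 ≤ i → i ≤ s → ν < i → Δt * β i ν ≤ ΔtFE * α i ν)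
    (u : V) (U : ℕ → V) (hU0 : U 0 = u)
    (hU : ∀ i, 1 ≤ i → i ≤ s →
      U i = ∑ ν ∈ Finset.range i, (α i ν • U ν + (Δt * β i ν) • L (U ν))) :
    ∀ i ≤ s, N (U i) ≤ N u := by
  have hN0 : N 0 = 0 := by
    have := hN_smul 0 0; simpa using this
  intro i
  induction i using Nat.strong_induction_on with
  | _ i ih =>
    intro hi
    rcases Nat.eq_zero_or_pos i with h0 | hpos
    · subst h0; rw [hU0]
    · rw [hU i hpos hi]
      have key : ∀ ν ∈ Finset.range i,
          N (α i ν • U ν + (Δt * β i ν) • L (U ν)) ≤ α i ν * N u := by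
        intro ν hν
        rw [Finset.mem_range] at hν
        have hαnn := hα i ν hpos hi hν
        have hβnn := hβ i ν hpos hi hν
        have hNU : N (U ν) ≤ N u := ih ν hν (le_trans (le_of_lt hν) hi)
        rcases eq_or_lt_of_le hαnn with hα0 | hαpos
        · have hb0 : Δt * β i ν = 0 :=
            le_antisymm (by simpa [← hα0] using hCFL i ν hpos hi hν)
              (mul_nonneg hΔt hβnn)
          rw [← hα0, hb0]
          simp [hN0]
        · set τ := Δt * β i ν / α i ν with hτ
          have hτnn : 0 ≤ τ := div_nonneg (mul_nonneg hΔt hβnn) hαnn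
          have hτle : τ ≤ ΔtFE := by
            rw [div_le_iff₀ hαpos]
            exact hCFL i ν hpos hi hν
          have heq : α i ν • U ν + (Δt * β i ν) • L (U ν)
              = α i ν • (U ν + τ • L (U ν)) := by
            rw [smul_add, smul_smul, hτ, mul_div_cancel₀ _ (ne_of_gt hαpos)]
          rw [heq, hN_smul, abs_of_nonneg hαnn]
          calc α i ν * N (U ν + τ • L (U ν)) ≤ α i ν * N (U ν) :=
                mul_le_mul_of_nonneg_left (hFE _ τ hτnn hτle) hαnn
            _ ≤ α i ν * N u := mul_le_mul_of_nonneg_left hNU hαnn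
      calc N (∑ ν ∈ Finset.range i, (α i ν • U ν + (Δt * β i ν) • L (U ν)))
          ≤ ∑ ν ∈ Finset.range i, N (α i ν • U ν + (Δt * β i ν) • L (U ν)) :=
            Finset.le_sum_of_subadditive N hN0.le hN_add _ _
        _ ≤ ∑ ν ∈ Finset.range i, α i ν * N u := Finset.sum_le_sum key
        _ = N u := by rw [← Finset.sum_mul, hconsist i hpos hi, one_mul]
end

section
/- Let Δx₀ > 0, Δx₁ > 0 be the widths of the interface cell and the adjacent fine cell, let Δt ∈ ℝ, let M ≥ 1 be an integer, and let real numbers H_{p,ν} for 0 ≤ p ≤ M−1 and ν ∈ {0,1} be given (the interface numerical fluxes at substep p, Runge–Kutta stage ν). Define the fine-cell means v₀, v₁, …, v_M by the SSP-RK(2,2) local steps with zero flux at the fine cell's outer edge: v_p^{(1)} = v_p + (Δt/(M·Δx₁))·H_{p,0} and v_{p+1} = (1/2)·v_p + (1/2)·( v_p^{(1)} + (Δt/(M·Δx₁))·H_{p,1} ). Define the interface-cell mean w¹ by the flux-accumulating corrector with zero flux at the interface cell's outer edge: ŵ^{(1)} = w⁰ − (Δt/(M·Δx₀))·Σ_{p=0}^{M−1}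 H_{p,0} and w¹ = (1/2)·w⁰ + (1/2)·( ŵ^{(1)} − (Δt/(M·Δx₀))·Σ_{p=0}^{M−1} H_{p,1} ). Then total mass is exactly conserved: Δx₀·w¹ + Δx₁·v_M = Δx₀·w⁰ + Δx₁·v₀. -/
/-- Exact mass conservation of the second-order LTS corrector based on SSP-RK(2,2):
the fine cell (width `Δx1`) is advanced with `M` substeps of size `Δt/M` receiving the
interface fluxes `H p ν`, while the interface cell (width `Δx0`) takes one coarse step
using the accumulated fluxes; total mass `Δx0 * w + Δx1 * v` is conserved. -/
theorem lts_rk22_mass_conservation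
    (Δx0 Δx1 : ℝ) (hΔx0 : 0 < Δx0) (hΔx1 : 0 < Δx1)
    (Δt : ℝ) (M : ℕ) (hM : 1 ≤ M)
    (H : ℕ → ℕ → ℝ)
    (v v1 : ℕ → ℝ)
    (hv1 : ∀ p < M, v1 p = v p + (Δt / (M * Δx1)) * H p 0)
    (hv : ∀ p < M,
      v (p + 1) = (1/2) * v p + (1/2) * (v1 p + (Δt / (M * Δx1)) * H p 1))
    (w0 w1 what1 : ℝ)
    (hwhat1 : what1 = w0 - (Δt / (M * Δx0)) * ∑ p ∈ Finset.range M, H p 0)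
    (hw1 : w1 = (1/2) * w0 +
      (1/2) * (what1 - (Δt / (M * Δx0)) * ∑ p ∈ Finset.range M, H p 1)) :
    Δx0 * w1 + Δx1 * v M = Δx0 * w0 + Δx1 * v 0 := by
  have hx0 : (Δx0 : ℝ) ≠ 0 := ne_of_gt hΔx0
  have hx1 : (Δx1 : ℝ) ≠ 0 := ne_of_gt hΔx1
  have key : ∀ n ≤ M, v n = v 0 + (Δt / (M * Δx1)) *
      ∑ p ∈ Finset.range n, ((H p 0 + H p 1) / 2) := by
    intro n hn
    induction n with
    | zero => simp
    | succ k ih =>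
      have hk : k < M := Nat.lt_of_succ_le hn
      rw [hv k hk, hv1 k hk, ih (le_of_lt hk), Finset.sum_range_succ]
      ring
  have hvM := key M le_rfl
  rw [hvM, hw1, hwhat1]
  have hsum : ∑ p ∈ Finset.range M, ((H p 0 + H p 1) / 2)
      = ((∑ p ∈ Finset.range M, H p 0) + (∑ p ∈ Finset.range M, H p 1)) / 2 := by
    rw [← Finset.sum_add_distrib, ← Finset.sum_div]
  rw [hsum]
  have hMne : (M:ℝ) ≠ 0 := Nat.cast_ne_zero.mpr (by omega)
  field_simp
  ring
end

section
/- Let s ≥ 1 and let real coefficients α_{iν}, β_{iν} (for 1 ≤ i ≤ s, 0 ≤ ν ≤ i−1) satisfy Σ_{ν=0}^{i−1} α_{iν} = 1 for every i. Let Δx₀ > 0, Δx₁ > 0, Δt ∈ ℝ, let M ≥ 1 be an integer, and let real numbers H_{p,ν} for 0 ≤ p ≤ M−1 and 0 ≤ ν ≤ s−1 be given (the interface numerical fluxes). Define the fine-cell means v₀, …, v_M by: for each p, stages v_p^{(0)} = v_p, v_p^{(i)} = Σ_{ν=0}^{i−1} ( α_{iν}·v_p^{(ν)} + β_{iν}·(Δt/(M·Δx₁))·H_{p,ν}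 ) for i = 1,…,s, and v_{p+1} = v_p^{(s)}. Define the interface-cell mean by the corrector: ŵ^{(0)} = w⁰, ŵ^{(i)} = Σ_{ν=0}^{i−1} ( α_{iν}·ŵ^{(ν)} − β_{iν}·(Δt/(M·Δx₀))·Σ_{p=0}^{M−1} H_{p,ν} ) for i = 1,…,s, and w¹ = ŵ^{(s)}. Then total mass is exactly conserved: Δx₀·w¹ + Δx₁·v_M = Δx₀·w⁰ + Δx₁·v₀. -/
/-- Exact mass conservation of the general `s`-stage LTS corrector in Shu–Osher form:
the fine cell (width `Δx1`) is advanced with `M` substeps of size `Δt/M` receiving the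
interface fluxes `H p ν`, while the interface cell (width `Δx0`) takes one coarse step
whose stage `i` accumulates, for each stage `ν`, the average over all substeps of the
stage-`ν` fluxes; total mass `Δx0 * w + Δx1 * v` is conserved. -/
theorem lts_general_mass_conservation
    (s : ℕ) (hs : 1 ≤ s)
    (α β : ℕ → ℕ → ℝ)
    (hconsist : ∀ i, 1 ≤ i → i ≤ s → (∑ ν ∈ Finset.range i, α i ν) = 1)
    (Δx0 Δx1 : ℝ) (hΔx0 : 0 < Δx0) (hΔx1 : 0 < Δx1)
    (Δt : ℝ) (M : ℕ) (hM : 1 ≤ M)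
    (H : ℕ → ℕ → ℝ)
    (v : ℕ → ℝ) (V : ℕ → ℕ → ℝ)
    (hV0 : ∀ p < M, V p 0 = v p)
    (hVi : ∀ p < M, ∀ i, 1 ≤ i → i ≤ s →
      V p i = ∑ ν ∈ Finset.range i,
        (α i ν * V p ν + β i ν * (Δt / (M * Δx1)) * H p ν))
    (hvnext : ∀ p < M, v (p + 1) = V p s)
    (w0 w1 : ℝ) (W : ℕ → ℝ) (hW0 : W 0 = w0)
    (hWi : ∀ i, 1 ≤ i → i ≤ s →
      W i = ∑ ν ∈ Finset.range i,
        (α i ν * W ν - β i ν * (Δt / (M * Δx0)) * ∑ p ∈ Finset.range M, H p ν))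
    (hw1 : w1 = W s) :
    Δx0 * w1 + Δx1 * v M = Δx0 * w0 + Δx1 * v 0 := by
  have hx0 : (Δx0 : ℝ) ≠ 0 := ne_of_gt hΔx0
  have hx1 : (Δx1 : ℝ) ≠ 0 := ne_of_gt hΔx1
  have hMne : (M : ℝ) ≠ 0 := Nat.cast_ne_zero.mpr (Nat.one_le_iff_ne_zero.mp hM)
  set T : ℕ → ℝ := fun i => Δx0 * W i + Δx1 * ∑ p ∈ Finset.range M, V p i with hT
  -- recursion for T
  have hTrec : ∀ i, 1 ≤ i → i ≤ s → T i = ∑ ν ∈ Finset.range i, α i ν * T ν := by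
    intro i h1 h2
    have hVsum : Δx1 * ∑ p ∈ Finset.range M, V p i
        = ∑ ν ∈ Finset.range i, (α i ν * (Δx1 * ∑ p ∈ Finset.range M, V p ν)
            + β i ν * (Δt / M) * ∑ p ∈ Finset.range M, H p ν) := by
      have : ∑ p ∈ Finset.range M, V p i
          = ∑ p ∈ Finset.range M, ∑ ν ∈ Finset.range i,
              (α i ν * V p ν + β i ν * (Δt / (M * Δx1)) * H p ν) := by
        apply Finset.sum_congr rfl
        intro p hp
        exact hVi p (Finset.mem_range.mp hp) i h1 h2
      rw [this, Finset.sum_comm, Finset.mul_sum]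
      apply Finset.sum_congr rfl
      intro ν _
      rw [Finset.mul_sum]
      simp only [mul_add]
      rw [Finset.sum_add_distrib]
      congr 1
      · simp only [Finset.mul_sum]
        exact Finset.sum_congr rfl fun p _ => by ring
      · simp only [Finset.mul_sum]
        refine Finset.sum_congr rfl fun p _ => ?_
        field_simp
    have hWsum : Δx0 * W i
        = ∑ ν ∈ Finset.range i, (α i ν * (Δx0 * W ν)
            - β i ν * (Δt / M) * ∑ p ∈ Finset.range M, H p ν) := by
      rw [hWi i h1 h2, Finset.mul_sum]
      apply Finset.sum_congr rfl
      intro ν _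
      field_simp
    simp only [hT]
    rw [hWsum, hVsum, ← Finset.sum_add_distrib]
    apply Finset.sum_congr rfl
    intro ν _
    ring
  have hTconst : ∀ i, i ≤ s → T i = T 0 := by
    intro i
    induction i using Nat.strong_induction_on with
    | _ i ih =>
      intro his
      rcases Nat.eq_zero_or_pos i with h0 | h1
      · simp [h0]
      · rw [hTrec i h1 his]
        have : ∑ ν ∈ Finset.range i, α i ν * T ν
            = ∑ ν ∈ Finset.range i, α i ν * T 0 := by
          apply Finset.sum_congr rfl
          intro ν hν
          have hνi := Finset.mem_range.mp hν
          rw [ih ν hνi (le_trans (le_of_lt hνi) his)]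
        rw [this, ← Finset.sum_mul, hconsist i h1 his, one_mul]
  have hTs := hTconst s le_rfl
  simp only [hT] at hTs
  have hVs : ∑ p ∈ Finset.range M, V p s = ∑ p ∈ Finset.range M, v (p + 1) := by
    apply Finset.sum_congr rfl
    intro p hp
    exact (hvnext p (Finset.mem_range.mp hp)).symm
  have hV0' : ∑ p ∈ Finset.range M, V p 0 = ∑ p ∈ Finset.range M, v p := by
    apply Finset.sum_congr rfl
    intro p hp
    exact hV0 p (Finset.mem_range.mp hp)
  rw [hVs, hV0'] at hTs
  have htel : ∑ p ∈ Finset.range M, v (p + 1) - ∑ p ∈ Finset.range M, v p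
      = v M - v 0 := by
    rw [← Finset.sum_sub_distrib]
    exact Finset.sum_range_sub v M
  rw [hw1, hW0] at *
  nlinarith [hTs, htel]
end

section
/- Let ū : ℤ → ℝ, let λ : ℤ → ℝ with λ_j ≥ 0 for all j, and for ν ∈ {0,1} let C^{(ν)}, D^{(ν)} : ℤ → ℝ with C^{(ν)}_j ≥ 0 and D^{(ν)}_j ≥ 0 for all j (index j standing for the cell edge j+1/2). Define the SSP-RK(2,2) incremental-form scheme: ū¹_j = ū_j + λ_j·( C^{(0)}_j·Δ₊ū_j − D^{(0)}_{j−1}·Δ₋ū_j ) and ū²_j = (1/2)·ū_j + (1/2)·( ū¹_j + λ_j·( C^{(1)}_j·Δ₊ū¹_j − D^{(1)}_{j−1}·Δ₋ū¹_j ) ). Assume the CFL-type condition λ_{j+1}·D^{(ν)}_j + λ_j·C^{(ν)}_j ≤ 1 for all j ∈ ℤ and ν ∈ {0,1}. Then, writing ū⁰ := ū, for every j ∈ ℤ: |ū²_{j+1} − ū²_j| ≤ |ū_{j+1} − ū_j| + (1/2)·Σ_{ν=0}^{1} [ λ_{j+1}·( C^{(ν)}_{j+1}·|Δ₊ū^{(ν)}_{j+1}|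 − D^{(ν)}_j·|Δ₋ū^{(ν)}_{j+1}| ) − λ_j·( C^{(ν)}_j·|Δ₊ū^{(ν)}_j| − D^{(ν)}_{j−1}·|Δ₋ū^{(ν)}_j| ) ]. -/
/-- Harten-type single-stage estimate for an incremental-form update. -/
lemma stage_incremental_estimate
    (u v lam C D : ℤ → ℝ) (hlam : ∀ j, 0 ≤ lam j)
    (hC : ∀ j, 0 ≤ C j) (hD : ∀ j, 0 ≤ D j)
    (hv : ∀ j, v j = u j +
      lam j * (C j * (u (j + 1) - u j) - D (j - 1) * (u j - u (j - 1))))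
    (hCFL : ∀ j : ℤ, lam (j + 1) * D j + lam j * C j ≤ 1) :
    ∀ j : ℤ, |v (j + 1) - v j| ≤ |u (j + 1) - u j| +
      (lam (j + 1) * (C (j + 1) * |u (j + 2) - u (j + 1)| - D j * |u (j + 1) - u j|)
        - lam j * (C j * |u (j + 1) - u j| - D (j - 1) * |u j - u (j - 1)|)) := by
  intro j
  have e1 : (j + 1 : ℤ) - 1 = j := by ring
  have e2 : (j + 1 : ℤ) + 1 = j + 2 := by ring
  have hdiff : v (j + 1) - v j =
      (1 - lam (j + 1) * D j - lam j * C j) * (u (j + 1) - u j)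
      + (lam (j + 1) * C (j + 1)) * (u (j + 2) - u (j + 1))
      + (lam j * D (j - 1)) * (u j - u (j - 1)) := by
    rw [hv (j + 1), hv j, e1, e2]; ring
  have ha : 0 ≤ 1 - lam (j + 1) * D j - lam j * C j := by
    have := hCFL j; linarith
  have h1 : |v (j + 1) - v j| ≤
      (1 - lam (j + 1) * D j - lam j * C j) * |u (j + 1) - u j|
      + (lam (j + 1) * C (j + 1)) * |u (j + 2) - u (j + 1)|
      + (lam j * D (j - 1)) * |u j - u (j - 1)| := by
    rw [hdiff]
    calc _ ≤ |(1 - lam (j + 1) * D j - lam j * C j) * (u (j + 1) - u j)|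
          + |(lam (j + 1) * C (j + 1)) * (u (j + 2) - u (j + 1))|
          + |(lam j * D (j - 1)) * (u j - u (j - 1))| := abs_add_three _ _ _
      _ = _ := by
          rw [abs_mul (1 - lam (j + 1) * D j - lam j * C j),
            abs_mul (lam (j + 1) * C (j + 1)), abs_mul (lam j * D (j - 1)),
            abs_of_nonneg ha,
            abs_of_nonneg (mul_nonneg (hlam _) (hC _)),
            abs_of_nonneg (mul_nonneg (hlam _) (hD _))]
  exact h1.trans (le_of_eq (by ring))

/-- Local difference estimate for the SSP-RK(2,2) incremental-form scheme: under
nonnegativity of the incremental coefficients and the CFL-type condition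
`λ_{j+1}·D^{(ν)}_j + λ_j·C^{(ν)}_j ≤ 1`, the consecutive differences of the updated
means are bounded by the old differences plus a telescoping correction involving the
two stages (`ū⁰ = ū`, `ū¹` the first stage). -/
theorem rk22_incremental_difference_estimate
    (ub : ℤ → ℝ) (lam : ℤ → ℝ) (hlam : ∀ j, 0 ≤ lam j)
    (C D : Fin 2 → ℤ → ℝ)
    (hC : ∀ ν j, 0 ≤ C ν j) (hD : ∀ ν j, 0 ≤ D ν j)
    (u1 u2 : ℤ → ℝ)
    (hu1 : ∀ j, u1 j = ub j +
      lam j * (C 0 j * (ub (j + 1) - ub j) - D 0 (j - 1) * (ub j - ub (j - 1))))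
    (hu2 : ∀ j, u2 j = (1/2) * ub j + (1/2) * (u1 j +
      lam j * (C 1 j * (u1 (j + 1) - u1 j) - D 1 (j - 1) * (u1 j - u1 (j - 1)))))
    (hCFL : ∀ (ν : Fin 2) (j : ℤ), lam (j + 1) * D ν j + lam j * C ν j ≤ 1) :
    ∀ j : ℤ,
      |u2 (j + 1) - u2 j| ≤ |ub (j + 1) - ub j| +
        (1/2) *
          ((lam (j + 1) * (C 0 (j + 1) * |ub (j + 2) - ub (j + 1)|
              - D 0 j * |ub (j + 1) - ub j|)
            - lam j * (C 0 j * |ub (j + 1) - ub j|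
              - D 0 (j - 1) * |ub j - ub (j - 1)|))
          + (lam (j + 1) * (C 1 (j + 1) * |u1 (j + 2) - u1 (j + 1)|
              - D 1 j * |u1 (j + 1) - u1 j|)
            - lam j * (C 1 j * |u1 (j + 1) - u1 j|
              - D 1 (j - 1) * |u1 j - u1 (j - 1)|))) := by
  intro j
  set w : ℤ → ℝ := fun j => u1 j +
    lam j * (C 1 j * (u1 (j + 1) - u1 j) - D 1 (j - 1) * (u1 j - u1 (j - 1))) with hw
  have h0 := stage_incremental_estimate ub u1 lam (C 0) (D 0) hlam (hC 0) (hD 0) hu1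
    (hCFL 0) j
  have h1 := stage_incremental_estimate u1 w lam (C 1) (D 1) hlam (hC 1) (hD 1)
    (fun j => rfl) (hCFL 1) j
  have hsplit : u2 (j + 1) - u2 j =
      (1/2) * (ub (j + 1) - ub j) + (1/2) * (w (j + 1) - w j) := by
    rw [hu2 (j + 1), hu2 j, hw]; ring
  have hb : |u2 (j + 1) - u2 j| ≤
      (1/2) * |ub (j + 1) - ub j| + (1/2) * |w (j + 1) - w j| := by
    rw [hsplit]
    calc _ ≤ |(1/2 : ℝ) * (ub (j + 1) - ub j)| + |(1/2 : ℝ) * (w (j + 1) - w j)| :=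
          abs_add_le _ _
      _ = _ := by rw [abs_mul, abs_mul, abs_of_nonneg (by norm_num : (0:ℝ) ≤ 1/2)]
  linarith
end

section
/- Let E be a real normed vector space, let L : E → E satisfy the Lipschitz condition ‖L(x) − L(y)‖ ≤ K·‖x − y‖ for all x, y ∈ E, let a ∈ E, Δt ≥ 0, let M ≥ 1 be an integer and 0 ≤ p ≤ M−1. Define the coarse forward-Euler stage w¹ = a + Δt·L(a), the stage-0 predictor w_{p,0} = (1 − p/M)·a + (p/M)·w¹, and the stage-1 predictor w_{p,1} = (1 − (p+1)/M)·a + ((p+1)/M)·w¹. Then the predicted stage-1 value differs from the value obtained by an actual forward-Euler substep from the stage-0 predictor by at most ‖ w_{p,0} + (Δt/M)·L(w_{p,0}) − w_{p,1} ‖ ≤ K·(p/M²)·Δt²·‖L(a)‖. -/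
/-- Consistency of the second-order LTS stage predictors: with `w¹ = a + Δt·L(a)`,
stage-0 predictor `w_{p,0} = (1 − p/M)·a + (p/M)·w¹` and stage-1 predictor
`w_{p,1} = (1 − (p+1)/M)·a + ((p+1)/M)·w¹`, applying a forward-Euler substep of size
`Δt/M` to `w_{p,0}` differs from `w_{p,1}` by at most `K·(p/M²)·Δt²·‖L(a)‖`. -/
theorem second_order_predictor_consistency
    {E : Type*} [NormedAddCommGroup E] [NormedSpace ℝ E]
    (L : E → E) (K : ℝ)
    (hL : ∀ x y : E, ‖L x - L y‖ ≤ K * ‖x - y‖)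
    (a : E) (Δt : ℝ) (hΔt : 0 ≤ Δt)
    (M : ℕ) (hM : 1 ≤ M) (p : ℕ) (hp : p ≤ M - 1) :
    ‖((1 - (p : ℝ) / M) • a + ((p : ℝ) / M) • (a + Δt • L a))
        + (Δt / M) • L ((1 - (p : ℝ) / M) • a + ((p : ℝ) / M) • (a + Δt • L a))
        - ((1 - ((p : ℝ) + 1) / M) • a + (((p : ℝ) + 1) / M) • (a + Δt • L a))‖
      ≤ K * ((p : ℝ) / (M : ℝ) ^ 2) * Δt ^ 2 * ‖L a‖ := by
  have hMpos : (0 : ℝ) < M := by exact_mod_cast Nat.lt_of_lt_of_le Nat.zero_lt_one hM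
  set c : ℝ := (p : ℝ) / M with hc
  have hcnn : 0 ≤ c := div_nonneg (Nat.cast_nonneg p) hMpos.le
  have harg : (1 - c) • a + c • (a + Δt • L a) = a + (c * Δt) • L a := by
    rw [smul_add, smul_smul, sub_smul, one_smul]; abel
  rw [harg]
  have hcol : a + (c * Δt) • L a + (Δt / M) • L (a + (c * Δt) • L a)
      - ((1 - ((p : ℝ) + 1) / M) • a + (((p : ℝ) + 1) / M) • (a + Δt • L a))
      = (Δt / M) • (L (a + (c * Δt) • L a) - L a) := by
    rw [smul_add, smul_smul, sub_smul, one_smul, smul_sub]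
    have : ((p : ℝ) + 1) / M * Δt = c * Δt + Δt / M := by
      rw [hc, div_mul_eq_mul_div, div_mul_eq_mul_div, ← add_div, add_mul, one_mul]
    rw [this, add_smul]; abel
  rw [hcol, norm_smul]
  have hlip := hL (a + (c * Δt) • L a) a
  have hnorm : ‖a + (c * Δt) • L a - a‖ = c * Δt * ‖L a‖ := by
    rw [add_sub_cancel_left, norm_smul, Real.norm_of_nonneg (mul_nonneg hcnn hΔt)]
  rw [hnorm] at hlip
  calc ‖Δt / ↑M‖ * ‖L (a + (c * Δt) • L a) - L a‖
      ≤ (Δt / M) * (K * (c * Δt * ‖L a‖)) := by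
        rw [Real.norm_of_nonneg (div_nonneg hΔt hMpos.le)]
        exact mul_le_mul_of_nonneg_left hlip (div_nonneg hΔt hMpos.le)
    _ = K * ((p : ℝ) / (M : ℝ) ^ 2) * Δt ^ 2 * ‖L a‖ := by
        rw [hc]; field_simp
end

section
/- Let E be a real normed vector space, let L : E → E be differentiable with derivative DL(x) at every x (a continuous linear map E → E, with HasFDerivAt L (DL x) x), and assume ‖DL(x) − DL(y)‖ ≤ K·‖x − y‖ for all x, y ∈ E. Let a ∈ E and Δt ≥ 0, and define the SSP-RK(3,3) stages w¹ = a + Δt·L(a) and w² = (3/4)·a + (1/4)·w¹ + (Δt/4)·L(w¹). Then ‖ 4·w² − 2·a − 2·w¹ − Δt²·DL(a)(L(a)) ‖ ≤ (K/2)·Δt³·‖L(a)‖². -/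
lemma taylor_bound_of_lipschitz_fderiv
    {E : Type*} [NormedAddCommGroup E] [NormedSpace ℝ E]
    (L : E → E) (DL : E → E →L[ℝ] E)
    (hderiv : ∀ x : E, HasFDerivAt L (DL x) x)
    (K : ℝ) (hK : ∀ x y : E, ‖DL x - DL y‖ ≤ K * ‖x - y‖)
    (a h : E) :
    ‖L (a + h) - L a - DL a h‖ ≤ (K / 2) * ‖h‖ ^ 2 := by
  set f : ℝ → E := fun t => L (a + t • h) - t • DL a h with hf
  have hd : ∀ t : ℝ, HasDerivAt f ((DL (a + t • h)) h - DL a h) t := by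
    intro t
    have h1 : HasDerivAt (fun t : ℝ => a + t • h) h t := by
      simpa using ((hasDerivAt_id t).smul_const h).const_add a
    have h2 : HasDerivAt (fun t : ℝ => L (a + t • h)) ((DL (a + t • h)) h) t :=
      (hderiv (a + t • h)).comp_hasDerivAt t h1
    have h3 := (hasDerivAt_id t).smul_const (DL a h)
    rw [one_smul] at h3
    exact h2.sub h3
  have key : ∀ x ∈ Set.Icc (0:ℝ) 1, ‖f x - f 0‖ ≤ (K / 2) * ‖h‖ ^ 2 * x ^ 2 := by
    have := image_norm_le_of_norm_deriv_right_le_deriv_boundary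
      (f := fun t => f t - f 0) (a := (0:ℝ)) (b := 1)
      (f' := fun t => (DL (a + t • h)) h - DL a h)
      (B := fun t => (K / 2) * ‖h‖ ^ 2 * t ^ 2)
      (B' := fun t => K * ‖h‖ ^ 2 * t) ?_ ?_ ?_ ?_ ?_
    · intro x hx; simpa using this hx
    · exact fun x _ => ((hd x).sub_const (f 0)).continuousAt.continuousWithinAt
    · intro x hx
      exact ((hd x).sub_const (f 0)).hasDerivWithinAt
    · simp
    · intro x
      have : HasDerivAt (fun t : ℝ => (K / 2) * ‖h‖ ^ 2 * t ^ 2)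
          ((K / 2) * ‖h‖ ^ 2 * (2 * x)) x := by
        simpa using (hasDerivAt_pow 2 x).const_mul ((K / 2) * ‖h‖ ^ 2)
      convert this using 1; ring
    · intro x hx
      calc ‖(DL (a + x • h)) h - DL a h‖
          = ‖(DL (a + x • h) - DL a) h‖ := by simp
        _ ≤ ‖DL (a + x • h) - DL a‖ * ‖h‖ := (DL (a + x • h) - DL a).le_opNorm h
        _ ≤ K * ‖a + x • h - a‖ * ‖h‖ := by
            have := hK (a + x • h) a
            exact mul_le_mul_of_nonneg_right this (norm_nonneg h)
        _ = K * ‖h‖ ^ 2 * x := by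
            rw [add_sub_cancel_left, norm_smul, Real.norm_eq_abs,
              abs_of_nonneg hx.1]
            ring
  have := key 1 (by constructor <;> norm_num)
  simp only [hf, zero_smul, sub_zero, one_smul] at this
  calc ‖L (a + h) - L a - DL a h‖ = ‖L (a + h) - DL a h - L (a + (0:ℝ) • h)‖ := by
        rw [zero_smul, add_zero]; congr 1; abel
    _ ≤ (K / 2) * ‖h‖ ^ 2 := by simpa using this

/-- Extraction of the second time derivative from the first two SSP-RK(3,3) stages:
if `L` is differentiable with Lipschitz derivative `DL` (constant `K`), then with
`w¹ = a + Δt·L(a)` and `w² = (3/4)·a + (1/4)·w¹ + (Δt/4)·L(w¹)`, the combination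
`4·w² − 2·a − 2·w¹` equals `Δt²·DL(a)(L(a))` up to an error of size
`(K/2)·Δt³·‖L(a)‖²`. -/
theorem rk33_second_derivative_extraction
    {E : Type*} [NormedAddCommGroup E] [NormedSpace ℝ E]
    (L : E → E) (DL : E → E →L[ℝ] E)
    (hderiv : ∀ x : E, HasFDerivAt L (DL x) x)
    (K : ℝ) (hK : ∀ x y : E, ‖DL x - DL y‖ ≤ K * ‖x - y‖)
    (a : E) (Δt : ℝ) (hΔt : 0 ≤ Δt) :
    ‖(4 : ℝ) • ((3/4 : ℝ) • a + (1/4 : ℝ) • (a + Δt • L a)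
        + (Δt / 4) • L (a + Δt • L a))
      - (2 : ℝ) • a - (2 : ℝ) • (a + Δt • L a) - (Δt ^ 2) • (DL a) (L a)‖
      ≤ (K / 2) * Δt ^ 3 * ‖L a‖ ^ 2 := by
  have hEq : (4 : ℝ) • ((3/4 : ℝ) • a + (1/4 : ℝ) • (a + Δt • L a)
        + (Δt / 4) • L (a + Δt • L a))
      - (2 : ℝ) • a - (2 : ℝ) • (a + Δt • L a) - (Δt ^ 2) • (DL a) (L a)
      = Δt • (L (a + Δt • L a) - L a - DL a (Δt • L a)) := by
    rw [map_smul]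
    module
  rw [hEq, norm_smul, Real.norm_eq_abs, abs_of_nonneg hΔt]
  calc Δt * ‖L (a + Δt • L a) - L a - DL a (Δt • L a)‖
      ≤ Δt * ((K / 2) * ‖Δt • L a‖ ^ 2) :=
        mul_le_mul_of_nonneg_left
          (taylor_bound_of_lipschitz_fderiv L DL hderiv K hK a (Δt • L a)) hΔt
    _ = (K / 2) * Δt ^ 3 * ‖L a‖ ^ 2 := by
        rw [norm_smul, Real.norm_eq_abs, abs_of_nonneg hΔt]; ring
end

section
/- Let E be a real normed vector space, let L : E → E be twice continuously differentiable (ContDiff ℝ 2), let w : ℝ → E satisfy w'(τ) = L(w(τ)) for all τ ∈ ℝ (in the sense of HasDerivAt), let t ∈ ℝ and θ ∈ [0,1]. For Δt ∈ ℝ define the SSP-RK(3,3) stages w¹(Δt) = w(t) + Δt·L(w(t)) and w²(Δt) = (3/4)·w(t) + (1/4)·w¹(Δt) + (Δt/4)·L(w¹(Δt)), and the third-order predictor P(Δt) = (1 − θ − θ²)·w(t) + (θ − θ²)·w¹(Δt) + 2θ²·w²(Δt). Then there exist constants C > 0 and δ > 0 such that ‖ w(t + θ·Δt) − P(Δt)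 ‖ ≤ C·|Δt|³ for all |Δt| ≤ δ (i.e. w(t + θ·Δt) − P(Δt) = O(Δt³) as Δt → 0). -/
section Helpers
variable {F : Type*} [NormedAddCommGroup F] [NormedSpace ℝ F]

lemma abs_le_of_mem_uIcc' {y s : ℝ} (h : y ∈ Set.uIcc 0 s) : |y| ≤ |s| := by
  rcases Set.mem_uIcc.mp h with ⟨h1, h2⟩ | ⟨h1, h2⟩ <;> rw [abs_le] <;>
    constructor <;> rcases abs_cases s with ⟨h3, h4⟩ | ⟨h3, h4⟩ <;> linarith

lemma mvt_uIcc' {f f' : ℝ → F} {C x : ℝ}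
    (hd : ∀ y ∈ Set.uIcc 0 x, HasDerivAt f (f' y) y)
    (hb : ∀ y ∈ Set.uIcc 0 x, ‖f' y‖ ≤ C) :
    ‖f x - f 0‖ ≤ C * |x| := by
  have := Convex.norm_image_sub_le_of_norm_hasDerivWithin_le
    (fun y hy => (hd y hy).hasDerivWithinAt) hb
    (convex_uIcc (0 : ℝ) x) Set.left_mem_uIcc Set.right_mem_uIcc
  simpa using this

lemma c1_lip' (G : ℝ → F) (hG : ContDiff ℝ 1 G) :
    ∃ K ≥ (0 : ℝ), ∀ s : ℝ, |s| ≤ 1 → ‖G s - G 0‖ ≤ K * |s| := by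
  obtain ⟨K, hK⟩ := (isCompact_Icc (a := (-1 : ℝ)) (b := 1)).exists_bound_of_continuousOn
    (hG.continuous_deriv le_rfl).continuousOn
  refine ⟨max K 0, le_max_right _ _, fun s hs => ?_⟩
  refine mvt_uIcc' (fun y _ => (hG.differentiable one_ne_zero y).hasDerivAt) (fun y hy => ?_)
  have h1 : |y| ≤ 1 := le_trans (abs_le_of_mem_uIcc' hy) hs
  rw [abs_le] at h1
  exact le_trans (hK y ⟨h1.1, h1.2⟩) (le_max_left _ _)

lemma two_mul_abs_le' {K x y : ℝ} (hK : 0 ≤ K) (h : |x| ≤ |y|) :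
    K * |x| * |x| ≤ K * |y| * |y| :=
  mul_le_mul (mul_le_mul_of_nonneg_left h hK) h (abs_nonneg x) (mul_nonneg hK (abs_nonneg y))

lemma three_mul_abs_le' {K x y : ℝ} (hK : 0 ≤ K) (h : |x| ≤ |y|) :
    K * |x| * |x| * |x| ≤ K * |y| * |y| * |y| :=
  mul_le_mul (two_mul_abs_le' hK h) h (abs_nonneg x)
    (mul_nonneg (mul_nonneg hK (abs_nonneg y)) (abs_nonneg y))

end Helpers

set_option maxHeartbeats 1000000 in
/-- Third-order accuracy of the SSP-RK(3,3) based LTS predictor: for the autonomous ODE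
`w' = L(w)` with `L` twice continuously differentiable, the predictor
`P(Δt) = (1 − θ − θ²)·w(t) + (θ − θ²)·w¹ + 2θ²·w²` built from the first two SSP-RK(3,3)
stages with the coarse step `Δt` satisfies `w(t + θ·Δt) − P(Δt) = O(Δt³)`. -/
theorem third_order_predictor_error
    {E : Type*} [NormedAddCommGroup E] [NormedSpace ℝ E]
    (L : E → E) (hL : ContDiff ℝ 2 L)
    (w : ℝ → E) (hw : ∀ τ : ℝ, HasDerivAt w (L (w τ)) τ)
    (t θ : ℝ) (hθ0 : 0 ≤ θ) (hθ1 : θ ≤ 1)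
    (w1 w2 P : ℝ → E)
    (hw1 : ∀ Δt : ℝ, w1 Δt = w t + Δt • L (w t))
    (hw2 : ∀ Δt : ℝ, w2 Δt = (3/4 : ℝ) • w t + (1/4 : ℝ) • w1 Δt
      + (Δt / 4) • L (w1 Δt))
    (hP : ∀ Δt : ℝ, P Δt = (1 - θ - θ ^ 2) • w t + (θ - θ ^ 2) • w1 Δt
      + (2 * θ ^ 2) • w2 Δt) :
    ∃ C > (0 : ℝ), ∃ δ > (0 : ℝ), ∀ Δt : ℝ, |Δt| ≤ δ →
      ‖w (t + θ * Δt) - P Δt‖ ≤ C * |Δt| ^ 3 := by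
  classical
  set a : E := L (w t) with ha
  set Q : E := (fderiv ℝ L (w t)) a with hQ
  -- basic regularity
  have hL1 : ContDiff ℝ 1 L := hL.of_le (by norm_num)
  have hLd : Differentiable ℝ L := hL1.differentiable one_ne_zero
  have hwd : Differentiable ℝ w := fun τ => (hw τ).differentiableAt
  have hderivw : deriv w = fun τ => L (w τ) := funext fun τ => (hw τ).deriv
  have hw1' : ContDiff ℝ 1 w := by
    rw [contDiff_one_iff_deriv]
    exact ⟨hwd, hderivw ▸ hL1.continuous.comp hwd.continuous⟩
  have hDL : ContDiff ℝ 1 (fderiv ℝ L) := hL.fderiv_right (by norm_num)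
  -- the two auxiliary C¹ maps
  set F : ℝ → E := fun s => (fderiv ℝ L (w (t + s))) (L (w (t + s))) with hF
  set B : ℝ → E := fun s => (fderiv ℝ L (w t + s • a)) a with hB
  have hshift : ContDiff ℝ 1 (fun s : ℝ => w (t + s)) :=
    hw1'.comp (contDiff_const.add contDiff_id)
  have hFc1 : ContDiff ℝ 1 F :=
    (hDL.comp hshift).clm_apply (hL1.comp hshift)
  have hline : ContDiff ℝ 1 (fun s : ℝ => w t + s • a) :=
    contDiff_const.add (contDiff_id.smul contDiff_const)
  have hBc1 : ContDiff ℝ 1 B :=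
    (hDL.comp hline).clm_apply contDiff_const
  obtain ⟨K₁, hK₁0, hK₁⟩ := c1_lip' F hFc1
  obtain ⟨K₂, hK₂0, hK₂⟩ := c1_lip' B hBc1
  have hF0 : F 0 = Q := by simp [hF, hQ, ha]
  have hB0 : B 0 = Q := by simp [hB, hQ]
  -- derivative of the line map
  have hlined : ∀ s : ℝ, HasDerivAt (fun s : ℝ => w t + s • a) a s := fun s => by
    simpa using ((hasDerivAt_id s).smul_const a).const_add (w t)
  -- derivative of s ↦ w (t + s)
  have hshiftd : ∀ s : ℝ, HasDerivAt (fun s : ℝ => w (t + s)) (L (w (t + s))) s := fun s => by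
    have hinner : HasDerivAt (fun s : ℝ => t + s) 1 s := by
      simpa using (hasDerivAt_id s).const_add t
    have h := (hw (t + s)).scomp s hinner
    rw [one_smul] at h
    exact h
  -- ψ bound: ‖L(w t + Δt•a) - a - Δt•Q‖ ≤ K₂ * |Δt| * |Δt|
  set ψ : ℝ → E := fun s => L (w t + s • a) - s • Q with hψ
  have hψd : ∀ s : ℝ, HasDerivAt ψ (B s - Q) s := fun s => by
    simpa [hψ, hB, Function.comp_def, Pi.sub_def] using ((hLd (w t + s • a)).hasFDerivAt.comp_hasDerivAt s (hlined s)).sub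
      ((hasDerivAt_id s).smul_const Q)
  have hψ0 : ψ 0 = a := by simp [hψ, ha]
  have hRbound : ∀ Δt : ℝ, |Δt| ≤ 1 →
      ‖L (w t + Δt • a) - a - Δt • Q‖ ≤ K₂ * |Δt| * |Δt| := by
    intro Δt hΔt
    have := mvt_uIcc' (f := ψ) (f' := fun y => B y - Q) (C := K₂ * |Δt|) (x := Δt)
      (fun y _ => hψd y) (fun y hy => ?_)
    · have : ‖ψ Δt - ψ 0‖ ≤ K₂ * |Δt| * |Δt| := this
      rw [hψ0] at this
      simp only [hψ] at this
      rw [sub_sub, add_comm (Δt • Q) a, ← sub_sub] at this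
      exact this
    · have h1 : |y| ≤ |Δt| := abs_le_of_mem_uIcc' hy
      calc ‖B y - Q‖ = ‖B y - B 0‖ := by rw [hB0]
        _ ≤ K₂ * |y| := hK₂ y (h1.trans hΔt)
        _ ≤ K₂ * |Δt| := mul_le_mul_of_nonneg_left h1 hK₂0
  -- φ bound: third-order Taylor remainder of w at t
  set φ1 : ℝ → E := fun s => L (w (t + s)) - a - s • Q with hφ1
  have hφ1d : ∀ s : ℝ, HasDerivAt φ1 (F s - Q) s := fun s => by
    simpa [hφ1, hF, Function.comp_def, Pi.sub_def] using
      (((hLd (w (t + s))).hasFDerivAt.comp_hasDerivAt s (hshiftd s)).sub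
        (hasDerivAt_const s a)).sub ((hasDerivAt_id s).smul_const Q)
  have hφ10 : φ1 0 = 0 := by simp [hφ1, ha]
  have hφ1bound : ∀ s : ℝ, |s| ≤ 1 → ‖φ1 s‖ ≤ K₁ * |s| * |s| := by
    intro s hs
    have := mvt_uIcc' (f := φ1) (f' := fun y => F y - Q) (C := K₁ * |s|) (x := s)
      (fun y _ => hφ1d y) (fun y hy => ?_)
    · rw [hφ10, sub_zero] at this; exact this
    · have h1 : |y| ≤ |s| := abs_le_of_mem_uIcc' hy
      calc ‖F y - Q‖ = ‖F y - F 0‖ := by rw [hF0]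
        _ ≤ K₁ * |y| := hK₁ y (h1.trans hs)
        _ ≤ K₁ * |s| := mul_le_mul_of_nonneg_left h1 hK₁0
  set φ : ℝ → E := fun s => w (t + s) - w t - s • a - (s ^ 2 / 2) • Q with hφ
  have hφd : ∀ s : ℝ, HasDerivAt φ (φ1 s) s := fun s => by
    have h1 : HasDerivAt (fun s : ℝ => (s ^ 2 / 2) • Q) (s • Q) s := by
      have := ((hasDerivAt_pow 2 s).div_const 2).smul_const Q
      norm_num at this
      convert this using 1
    simpa [hφ, hφ1, Pi.sub_def] using
      (((hshiftd s).sub (hasDerivAt_const s (w t))).sub ((hasDerivAt_id s).smul_const a)).sub h1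
  have hφ0 : φ 0 = 0 := by simp [hφ]
  have hφbound : ∀ s : ℝ, |s| ≤ 1 → ‖φ s‖ ≤ K₁ * |s| * |s| * |s| := by
    intro s hs
    have := mvt_uIcc' (f := φ) (f' := φ1) (C := K₁ * |s| * |s|) (x := s)
      (fun y _ => hφd y) (fun y hy => ?_)
    · rw [hφ0, sub_zero] at this; exact this
    · have h1 : |y| ≤ |s| := abs_le_of_mem_uIcc' hy
      calc ‖φ1 y‖ ≤ K₁ * |y| * |y| := hφ1bound y (h1.trans hs)
        _ ≤ K₁ * |s| * |s| := two_mul_abs_le' hK₁0 h1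
  -- assemble
  refine ⟨K₁ + K₂ / 2 + 1, by positivity, 1, one_pos, fun Δt hΔt => ?_⟩
  have hθΔ : |θ * Δt| ≤ |Δt| := by
    rw [abs_mul, abs_of_nonneg hθ0]
    nlinarith [abs_nonneg Δt]
  have hkey : w (t + θ * Δt) - P Δt
      = φ (θ * Δt) - ((θ ^ 2 * Δt) / 2) • (L (w t + Δt • a) - a - Δt • Q) := by
    rw [hP, hw2, hw1]
    simp only [hφ]
    module
  rw [hkey]
  have h1 : ‖φ (θ * Δt)‖ ≤ K₁ * |Δt| * |Δt| * |Δt| :=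
    (hφbound (θ * Δt) (hθΔ.trans hΔt)).trans (three_mul_abs_le' hK₁0 hθΔ)
  have h2 : ‖((θ ^ 2 * Δt) / 2) • (L (w t + Δt • a) - a - Δt • Q)‖
      ≤ (|Δt| / 2) * (K₂ * |Δt| * |Δt|) := by
    rw [norm_smul]
    have hR := hRbound Δt hΔt
    have hcoef : ‖(θ ^ 2 * Δt) / 2‖ ≤ |Δt| / 2 := by
      rw [Real.norm_eq_abs, abs_div, abs_mul]
      have : |θ ^ 2| ≤ 1 := by rw [abs_of_nonneg (by positivity)]; nlinarith
      have := abs_nonneg Δt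
      rw [show |(2:ℝ)| = 2 by norm_num]
      nlinarith [abs_nonneg ((θ:ℝ)^2), norm_nonneg (L (w t + Δt • a) - a - Δt • Q)]
    have := norm_nonneg (L (w t + Δt • a) - a - Δt • Q)
    have h0 := abs_nonneg Δt
    nlinarith [norm_nonneg ((θ ^ 2 * Δt) / 2 : ℝ)]
  calc ‖φ (θ * Δt) - ((θ ^ 2 * Δt) / 2) • (L (w t + Δt • a) - a - Δt • Q)‖
      ≤ ‖φ (θ * Δt)‖ + ‖((θ ^ 2 * Δt) / 2) • (L (w t + Δt • a) - a - Δt • Q)‖ :=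
        norm_sub_le _ _
    _ ≤ K₁ * |Δt| * |Δt| * |Δt| + (|Δt| / 2) * (K₂ * |Δt| * |Δt|) := add_le_add h1 h2
    _ ≤ (K₁ + K₂ / 2 + 1) * |Δt| ^ 3 := by
        have hm : (0:ℝ) ≤ |Δt| * |Δt| * |Δt| :=
          mul_nonneg (mul_nonneg (abs_nonneg Δt) (abs_nonneg Δt)) (abs_nonneg Δt)
        nlinarith [hm]
end

section
/- Let E be a real normed vector space, let L : E → E be twice continuously differentiable (ContDiff ℝ 2), let a ∈ E, let M ≥ 1 be an integer and 0 ≤ p ≤ M−1, and set θ = p/M, θ̂ = p²/M², η = (p+1)/M, η̂ = p(p+2)/M². For Δt ∈ ℝ define the SSP-RK(3,3) stages w¹(Δt) = a + Δt·L(a) and w²(Δt) = (3/4)·a + (1/4)·w¹(Δt) + (Δt/4)·L(w¹(Δt)), and the predictors w_{p,0}(Δt) = (1 − θ − θ̂)·a + (θ − θ̂)·w¹(Δt) + 2θ̂·w²(Δt) and w_{p,1}(Δt) = (1 − η − η̂)·a + (η − η̂)·w¹(Δt) + 2η̂·w²(Δt). Then there exist constants C > 0 and δ > 0 such that ‖ w_{p,0}(Δt)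 + (Δt/M)·L(w_{p,0}(Δt)) − w_{p,1}(Δt) ‖ ≤ C·|Δt|³ for all |Δt| ≤ δ (i.e. the stage-1 prediction is consistent to third order with applying a forward-Euler substep of size Δt/M to the stage-0 prediction). -/
set_option maxHeartbeats 1000000


/-- Third-order consistency of the stage-0 and stage-1 SSP-RK(3,3) LTS predictors:
with `θ = p/M`, `θ̂ = p²/M²`, `η = (p+1)/M`, `η̂ = p(p+2)/M²`, and predictors built from
the coarse SSP-RK(3,3) stages `w¹(Δt) = a + Δt·L(a)`,
`w²(Δt) = (3/4)·a + (1/4)·w¹ + (Δt/4)·L(w¹)`, applying a forward-Euler substep of size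
`Δt/M` to the stage-0 prediction agrees with the stage-1 prediction up to `O(Δt³)`. -/
theorem third_order_predictor_stage1_consistency
    {E : Type*} [NormedAddCommGroup E] [NormedSpace ℝ E]
    (L : E → E) (hL : ContDiff ℝ 2 L)
    (a : E) (M : ℕ) (hM : 1 ≤ M) (p : ℕ) (hp : p ≤ M - 1)
    (θ θhat η ηhat : ℝ)
    (hθ : θ = (p : ℝ) / M) (hθhat : θhat = (p : ℝ) ^ 2 / (M : ℝ) ^ 2)
    (hη : η = ((p : ℝ) + 1) / M) (hηhat : ηhat = (p : ℝ) * ((p : ℝ) + 2) / (M : ℝ) ^ 2)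
    (w1 w2 wp0 wp1 : ℝ → E)
    (hw1 : ∀ Δt : ℝ, w1 Δt = a + Δt • L a)
    (hw2 : ∀ Δt : ℝ, w2 Δt = (3/4 : ℝ) • a + (1/4 : ℝ) • w1 Δt
      + (Δt / 4) • L (w1 Δt))
    (hwp0 : ∀ Δt : ℝ, wp0 Δt = (1 - θ - θhat) • a + (θ - θhat) • w1 Δt
      + (2 * θhat) • w2 Δt)
    (hwp1 : ∀ Δt : ℝ, wp1 Δt = (1 - η - ηhat) • a + (η - ηhat) • w1 Δt
      + (2 * ηhat) • w2 Δt) :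
    ∃ C > (0 : ℝ), ∃ δ > (0 : ℝ), ∀ Δt : ℝ, |Δt| ≤ δ →
      ‖wp0 Δt + (Δt / M) • L (wp0 Δt) - wp1 Δt‖ ≤ C * |Δt| ^ 3 := by
  subst hθ hθhat hη hηhat
  have hm0 : (0:ℝ) < (M:ℝ) := by exact_mod_cast hM
  have hmne : (M:ℝ) ≠ 0 := ne_of_gt hm0
  set P : ℝ → E := fun t => a + t • (((p:ℝ)/M - (p:ℝ)^2/(M:ℝ)^2/2) • L a
      + ((p:ℝ)^2/(M:ℝ)^2/2) • L (a + t • L a)) with hPdef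
  set g : ℝ → E := fun t => L (P t) - L a - ((p:ℝ)/M) • (L (a + t • L a) - L a) with hgdef
  -- wp0 equals P
  have hwp0P : ∀ t, wp0 t = P t := by
    intro t
    rw [hwp0, hw2, hw1, hPdef]
    match_scalars <;> field_simp <;> ring
  -- key algebraic identity
  have hkey : ∀ t : ℝ, wp0 t + (t / M) • L (wp0 t) - wp1 t = (t / M) • g t := by
    intro t
    rw [hwp0P, hwp1, hw2, hw1, hgdef]
    simp only [hPdef]
    match_scalars <;> field_simp <;> ring
  -- smoothness
  have hW1C : ContDiff ℝ 2 (fun t : ℝ => a + t • L a) :=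
    contDiff_const.add (contDiff_id.smul contDiff_const)
  have hLW1C : ContDiff ℝ 2 (fun t : ℝ => L (a + t • L a)) := hL.comp hW1C
  have hPC : ContDiff ℝ 2 P :=
    contDiff_const.add (contDiff_id.smul
      (contDiff_const.add (hLW1C.const_smul _)))
  have hgC : ContDiff ℝ 2 g :=
    ((hL.comp hPC).sub contDiff_const).sub ((hLW1C.sub contDiff_const).const_smul _)
  -- derivative of g at 0 is 0
  have hW1d : HasDerivAt (fun t : ℝ => a + t • L a) (L a) 0 := by
    simpa using ((hasDerivAt_id (0:ℝ)).smul_const (L a)).const_add a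
  have hLdiff : Differentiable ℝ L := hL.differentiable two_ne_zero
  have hLW1d : HasDerivAt (fun t : ℝ => L (a + t • L a)) (fderiv ℝ L a (L a)) 0 := by
    have h := (hLdiff (a + (0:ℝ) • L a)).hasFDerivAt.comp_hasDerivAt 0 hW1d
    simpa [Function.comp_def] using h
  have hvd : HasDerivAt (fun t : ℝ => ((p:ℝ)/M - (p:ℝ)^2/(M:ℝ)^2/2) • L a
      + ((p:ℝ)^2/(M:ℝ)^2/2) • L (a + t • L a))
      (((p:ℝ)^2/(M:ℝ)^2/2) • fderiv ℝ L a (L a)) 0 :=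
    (hLW1d.const_smul _).const_add _
  have hPd : HasDerivAt P (((p:ℝ)/M) • L a) 0 := by
    have h := ((hasDerivAt_id (0:ℝ)).smul hvd).const_add a
    have h2 : HasDerivAt P ((0:ℝ) • (((p:ℝ)^2/(M:ℝ)^2/2) • fderiv ℝ L a (L a))
        + (1:ℝ) • (((p:ℝ)/M - (p:ℝ)^2/(M:ℝ)^2/2) • L a
          + ((p:ℝ)^2/(M:ℝ)^2/2) • L (a + (0:ℝ) • L a))) 0 := h
    have heq : ((0:ℝ) • (((p:ℝ)^2/(M:ℝ)^2/2) • fderiv ℝ L a (L a))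
        + (1:ℝ) • (((p:ℝ)/M - (p:ℝ)^2/(M:ℝ)^2/2) • L a
          + ((p:ℝ)^2/(M:ℝ)^2/2) • L (a + (0:ℝ) • L a))) = ((p:ℝ)/M) • L a := by
      simp only [zero_smul, one_smul, smul_zero, add_zero, zero_add]
      module
    rwa [heq] at h2
  have hP0 : P 0 = a := by simp [hPdef]
  have hLPd : HasDerivAt (fun t : ℝ => L (P t)) (((p:ℝ)/M) • fderiv ℝ L a (L a)) 0 := by
    have h := (hLdiff (P 0)).hasFDerivAt.comp_hasDerivAt 0 hPd
    rw [hP0] at h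
    simpa [map_smul, Function.comp_def] using h
  have hgd : HasDerivAt g 0 0 := by
    have h := (hLPd.sub_const (L a)).sub ((hLW1d.sub_const (L a)).const_smul ((p:ℝ)/M))
    have heq : ((p:ℝ)/M) • fderiv ℝ L a (L a) - ((p:ℝ)/M) • fderiv ℝ L a (L a) = 0 :=
      sub_self _
    rw [heq] at h
    exact h
  have hderivg0 : deriv g 0 = 0 := hgd.deriv
  have hg0 : g 0 = 0 := by simp [hgdef, hP0]
  -- deriv g is C¹, hence locally Lipschitz at 0
  have hdgC : ContDiff ℝ 1 (deriv g) := by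
    have h2 : ContDiff ℝ ((1:WithTop ℕ∞) + 1) g := by exact_mod_cast hgC
    exact (contDiff_succ_iff_deriv.mp h2).2.2
  obtain ⟨K, s, hs, hlip⟩ := hdgC.contDiffAt.exists_lipschitzOnWith (x := 0)
  obtain ⟨ε, hε, hball⟩ := Metric.mem_nhds_iff.mp hs
  refine ⟨(K:ℝ) / M + 1, by positivity, ε/2, by positivity, ?_⟩
  intro t ht
  have hgdiff : Differentiable ℝ g := hgC.differentiable two_ne_zero
  have h0s : (0:ℝ) ∈ s := hball (by simpa [Metric.mem_ball] using hε)
  -- bound on deriv g on closedBall 0 |t|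
  have hbound : ∀ x ∈ Metric.closedBall (0:ℝ) |t|, ‖deriv g x‖ ≤ (K:ℝ) * |t| := by
    intro x hx
    have hx' : |x| ≤ |t| := by simpa [Metric.mem_closedBall, Real.dist_eq] using hx
    have hxball : x ∈ Metric.ball (0:ℝ) ε := by
      simp only [Metric.mem_ball, Real.dist_eq, sub_zero]
      have : |x| ≤ ε/2 := hx'.trans ht
      linarith
    have hxs : x ∈ s := hball hxball
    have hl := hlip.norm_sub_le hxs h0s
    rw [hderivg0, sub_zero, sub_zero, Real.norm_eq_abs] at hl
    exact hl.trans (mul_le_mul_of_nonneg_left hx' K.2)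
  have hmem0 : (0:ℝ) ∈ Metric.closedBall (0:ℝ) |t| := by
    simp [Metric.mem_closedBall, abs_nonneg]
  have hmemt : t ∈ Metric.closedBall (0:ℝ) |t| := by
    simp [Metric.mem_closedBall, Real.dist_eq]
  have hmv : ‖g t - g 0‖ ≤ ((K:ℝ) * |t|) * ‖t - 0‖ :=
    Convex.norm_image_sub_le_of_norm_hasDerivWithin_le
      (fun x _ => (hgdiff x).hasDerivAt.hasDerivWithinAt) hbound
      (convex_closedBall _ _) hmem0 hmemt
  rw [hg0, sub_zero, sub_zero, Real.norm_eq_abs] at hmv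
  rw [hkey t, norm_smul, Real.norm_eq_abs, abs_div]
  have habsM : |(M:ℝ)| = (M:ℝ) := abs_of_pos hm0
  calc |t| / |(M:ℝ)| * ‖g t‖ ≤ |t| / (M:ℝ) * ((K:ℝ) * |t| * |t|) := by
        rw [habsM]
        exact mul_le_mul_of_nonneg_left hmv (by positivity)
    _ = (K:ℝ) / M * |t|^3 := by ring
    _ ≤ ((K:ℝ) / M + 1) * |t|^3 := by nlinarith [pow_nonneg (abs_nonneg t) 3]
end

section
/- Let E be a real normed vector space, let L : E → E be twice continuously differentiable (ContDiff ℝ 2), let a ∈ E, let M ≥ 1 be an integer and 0 ≤ p ≤ M−1, and set θ = p/M, θ̂ = p²/M², γ = (2p+1)/(2M), γ̂ = (2p²+2p+1)/(2M²). For Δt ∈ ℝ define the SSP-RK(3,3) stages w¹(Δt) = a + Δt·L(a) and w²(Δt) = (3/4)·a + (1/4)·w¹(Δt) + (Δt/4)·L(w¹(Δt)), the stage-0 predictor w_{p,0}(Δt) = (1 − θ − θ̂)·a + (θ − θ̂)·w¹(Δt) + 2θ̂·w²(Δt), the computed substep stage w_{p,1}(Δt) = w_{p,0}(Δt) + (Δt/M)·L(w_{p,0}(Δt)),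 and the stage-2 predictor w_{p,2}(Δt) = (1 − γ − γ̂)·a + (γ − γ̂)·w¹(Δt) + 2γ̂·w²(Δt). Then there exist constants C > 0 and δ > 0 such that ‖ (3/4)·w_{p,0}(Δt) + (1/4)·w_{p,1}(Δt) + (Δt/(4M))·L(w_{p,1}(Δt)) − w_{p,2}(Δt) ‖ ≤ C·|Δt|³ for all |Δt| ≤ δ (i.e. the stage-2 prediction is consistent to third order with performing the second SSP-RK(3,3) substep of size Δt/M from the predicted stages). -/
lemma quad_bound {E : Type*} [NormedAddCommGroup E] [NormedSpace ℝ E]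
    (g : ℝ → E) (hg : ContDiff ℝ 2 g) (h0 : g 0 = 0) (h1 : deriv g 0 = 0) :
    ∃ C > (0:ℝ), ∀ t : ℝ, |t| ≤ 1 → ‖g t‖ ≤ C * t ^ 2 := by
  have hg2 : ContDiff ℝ (1+1) g := by norm_num; exact hg
  rw [contDiff_succ_iff_deriv] at hg2
  obtain ⟨hgd, -, hg1⟩ := hg2
  have hg1' : ContDiff ℝ (0+1) (deriv g) := by norm_num; exact hg1
  rw [contDiff_succ_iff_deriv] at hg1'
  obtain ⟨hdd, -, hg0⟩ := hg1'
  have hcont : ContinuousOn (deriv (deriv g)) (Set.Icc (-1:ℝ) 1) := hg0.continuous.continuousOn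
  obtain ⟨K, hK⟩ := (isCompact_Icc (a := (-1:ℝ)) (b := 1)).exists_bound_of_continuousOn hcont
  refine ⟨max K 0 + 1, by positivity, ?_⟩
  intro t ht
  set K' := max K 0 + 1 with hK'
  have hK'pos : (0:ℝ) < K' := by positivity
  have hsub : Set.uIcc (0:ℝ) t ⊆ Set.Icc (-1:ℝ) 1 := by
    intro x hx
    rcases Set.mem_uIcc.mp hx with ⟨h1x, h2x⟩ | ⟨h1x, h2x⟩ <;>
      constructor <;> nlinarith [abs_le.mp ht]
  -- first: ‖deriv g s‖ ≤ K' * |s| for s ∈ uIcc 0 t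
  have step1 : ∀ s ∈ Set.uIcc (0:ℝ) t, ‖deriv g s‖ ≤ K' * |t| := by
    intro s hs
    have h1' : ‖deriv g s - deriv g 0‖ ≤ K' * ‖s - 0‖ := by
      apply Convex.norm_image_sub_le_of_norm_hasDerivWithin_le
        (f' := deriv (deriv g)) (s := Set.uIcc (0:ℝ) t)
      · intro x hx; exact (hdd x).hasDerivAt.hasDerivWithinAt
      · intro x hx
        exact le_trans (hK x (hsub hx)) (by simp [hK']; linarith [le_max_left K 0])
      · exact convex_uIcc _ _
      · exact Set.left_mem_uIcc
      · exact hs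
    have habs : |s| ≤ |t| := by
      rcases Set.mem_uIcc.mp hs with ⟨h1x, h2x⟩ | ⟨h1x, h2x⟩ <;>
        cases abs_cases t <;> cases abs_cases s <;> linarith
    rw [h1, sub_zero, sub_zero] at h1'
    calc ‖deriv g s‖ ≤ K' * ‖s‖ := h1'
    _ ≤ K' * |t| := by rw [Real.norm_eq_abs]; exact mul_le_mul_of_nonneg_left habs hK'pos.le
  have step2 : ‖g t - g 0‖ ≤ (K' * |t|) * ‖t - 0‖ := by
    apply Convex.norm_image_sub_le_of_norm_hasDerivWithin_le
      (f' := deriv g) (s := Set.uIcc (0:ℝ) t) _ step1 (convex_uIcc _ _)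
      Set.left_mem_uIcc Set.right_mem_uIcc
    intro x hx; exact (hgd x).hasDerivAt.hasDerivWithinAt
  rw [h0, sub_zero, sub_zero, Real.norm_eq_abs] at step2
  calc ‖g t‖ ≤ K' * |t| * |t| := step2
  _ = K' * t ^ 2 := by rw [mul_assoc, ← abs_mul, ← sq, abs_sq]

/-- Third-order consistency of the stage-2 SSP-RK(3,3) LTS predictor: with `θ = p/M`,
`θ̂ = p²/M²`, `γ = (2p+1)/(2M)`, `γ̂ = (2p²+2p+1)/(2M²)`, coarse stages
`w¹(Δt) = a + Δt·L(a)`, `w²(Δt) = (3/4)·a + (1/4)·w¹ + (Δt/4)·L(w¹)`, stage-0 predictor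
`w_{p,0}`, computed substep stage `w_{p,1} = w_{p,0} + (Δt/M)·L(w_{p,0})` and stage-2
predictor `w_{p,2}`, performing the second SSP-RK(3,3) substep of size `Δt/M` from the
predicted stages agrees with `w_{p,2}` up to `O(Δt³)`. -/
theorem third_order_predictor_stage2_consistency
    {E : Type*} [NormedAddCommGroup E] [NormedSpace ℝ E]
    (L : E → E) (hL : ContDiff ℝ 2 L)
    (a : E) (M : ℕ) (hM : 1 ≤ M) (p : ℕ) (hp : p ≤ M - 1)
    (θ θhat γ γhat : ℝ)
    (hθ : θ = (p : ℝ) / M) (hθhat : θhat = (p : ℝ) ^ 2 / (M : ℝ) ^ 2)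
    (hγ : γ = (2 * (p : ℝ) + 1) / (2 * M))
    (hγhat : γhat = (2 * (p : ℝ) ^ 2 + 2 * (p : ℝ) + 1) / (2 * (M : ℝ) ^ 2))
    (w1 w2 wp0 wp1 wp2 : ℝ → E)
    (hw1 : ∀ Δt : ℝ, w1 Δt = a + Δt • L a)
    (hw2 : ∀ Δt : ℝ, w2 Δt = (3/4 : ℝ) • a + (1/4 : ℝ) • w1 Δt
      + (Δt / 4) • L (w1 Δt))
    (hwp0 : ∀ Δt : ℝ, wp0 Δt = (1 - θ - θhat) • a + (θ - θhat) • w1 Δt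
      + (2 * θhat) • w2 Δt)
    (hwp1 : ∀ Δt : ℝ, wp1 Δt = wp0 Δt + (Δt / M) • L (wp0 Δt))
    (hwp2 : ∀ Δt : ℝ, wp2 Δt = (1 - γ - γhat) • a + (γ - γhat) • w1 Δt
      + (2 * γhat) • w2 Δt) :
    ∃ C > (0 : ℝ), ∃ δ > (0 : ℝ), ∀ Δt : ℝ, |Δt| ≤ δ →
      ‖(3/4 : ℝ) • wp0 Δt + (1/4 : ℝ) • wp1 Δt + (Δt / (4 * M)) • L (wp1 Δt)
        - wp2 Δt‖ ≤ C * |Δt| ^ 3 := by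
  have hM0 : (M:ℝ) ≠ 0 := Nat.cast_ne_zero.mpr (by omega)
  set u := L a with hu
  set α : ℝ := θ - γ - θhat + γhat with hα
  set β : ℝ := θhat - γhat with hβ
  set W1 : ℝ → E := fun t => a + t • u with hW1def
  set W2 : ℝ → E := fun t => (3/4:ℝ) • a + (1/4:ℝ) • W1 t + (t/4) • L (W1 t) with hW2def
  set W0 : ℝ → E := fun t => (1-θ-θhat) • a + (θ-θhat) • W1 t + (2*θhat) • W2 t with hW0def
  set V1 : ℝ → E := fun t => W0 t + (t / (M:ℝ)) • L (W0 t) with hV1def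
  set g : ℝ → E := fun t => α • u + (β/2) • (u + L (W1 t))
      + (1/(4*(M:ℝ))) • (L (W0 t) + L (V1 t)) with hgdef
  have ew1 : ∀ t, w1 t = W1 t := fun t => hw1 t
  have ew2 : ∀ t, w2 t = W2 t := fun t => by rw [hw2, ew1]
  have ew0 : ∀ t, wp0 t = W0 t := fun t => by rw [hwp0, ew1, ew2]
  have ev1 : ∀ t, wp1 t = V1 t := fun t => by rw [hwp1, ew0]
  -- key algebraic identity
  have key : ∀ t : ℝ, (3/4:ℝ) • wp0 t + (1/4:ℝ) • wp1 t + (t/(4*(M:ℝ))) • L (wp1 t)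
      - wp2 t = t • g t := by
    intro t
    rw [ev1, ew0, hwp2, ew1, ew2]
    simp only [hgdef, hV1def, hW0def, hW2def, hW1def]
    match_scalars <;> ring
  -- values at 0
  have hW10 : W1 0 = a := by simp [hW1def]
  have hW00 : W0 0 = a := by
    simp only [hW0def, hW2def, hW1def]
    match_scalars <;> ring
  have hV10 : V1 0 = a := by
    simp only [hV1def, hW00]
    simp
  have hg0 : g 0 = 0 := by
    have hs : α + β + 1/(2*(M:ℝ)) = 0 := by
      rw [hα, hβ, hθ, hγ]; field_simp; ring
    simp only [hgdef, hW10, hW00, hV10, ← hu]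
    match_scalars
    linear_combination hs
  -- smoothness
  have hLd : Differentiable ℝ L := hL.differentiable (by norm_num)
  have cW1 : ContDiff ℝ 2 W1 := by
    rw [hW1def]; exact contDiff_const.add (contDiff_id.smul contDiff_const)
  have cLW1 : ContDiff ℝ 2 (fun t => L (W1 t)) := hL.comp cW1
  have cW2 : ContDiff ℝ 2 W2 := by
    rw [hW2def]
    exact (contDiff_const.add (cW1.const_smul _)).add ((contDiff_id.div_const _).smul cLW1)
  have cW0 : ContDiff ℝ 2 W0 := by
    rw [hW0def]
    exact (contDiff_const.add (cW1.const_smul _)).add (cW2.const_smul _)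
  have cLW0 : ContDiff ℝ 2 (fun t => L (W0 t)) := hL.comp cW0
  have cV1 : ContDiff ℝ 2 V1 := by
    rw [hV1def]
    exact cW0.add ((contDiff_id.div_const _).smul cLW0)
  have cLV1 : ContDiff ℝ 2 (fun t => L (V1 t)) := hL.comp cV1
  have cg : ContDiff ℝ 2 g := by
    rw [hgdef]
    exact (contDiff_const.add ((contDiff_const.add cLW1).const_smul _)).add
      ((cLW0.add cLV1).const_smul _)
  -- derivatives at 0
  set D := fderiv ℝ L a with hD
  have hDa : HasFDerivAt L D a := (hLd a).hasFDerivAt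
  have hW1' : HasDerivAt W1 u 0 := by
    have := ((hasDerivAt_id (0:ℝ)).smul_const u).const_add a
    rw [hW1def]; simpa using this
  have hLW1' : HasDerivAt (fun t => L (W1 t)) (D u) 0 := by
    have := (hW10 ▸ hDa).comp_hasDerivAt 0 hW1'
    simpa [Function.comp_def] using this
  have hW2' : HasDerivAt W2 ((1/2:ℝ) • u) 0 := by
    have hc : HasDerivAt (fun t:ℝ => t/4) (1/4:ℝ) 0 := (hasDerivAt_id 0).div_const 4
    have h2 := ((hasDerivAt_const (0:ℝ) ((3/4:ℝ) • a)).add (hW1'.const_smul (1/4:ℝ))).add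
      (hc.smul hLW1')
    rw [hW2def]
    convert h2 using 1
    · rfl
    rw [hW10, ← hu]
    module
  have hW0' : HasDerivAt W0 (θ • u) 0 := by
    have h2 := ((hasDerivAt_const (0:ℝ) ((1-θ-θhat) • a)).add
      (hW1'.const_smul (θ-θhat))).add (hW2'.const_smul (2*θhat))
    rw [hW0def]
    convert h2 using 1
    · rfl
    module
  have hLW0' : HasDerivAt (fun t => L (W0 t)) (θ • D u) 0 := by
    have := (hW00 ▸ hDa).comp_hasDerivAt 0 hW0'
    simpa [Function.comp_def, map_smul] using this
  have hV1' : HasDerivAt V1 ((θ + 1/(M:ℝ)) • u) 0 := by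
    have hc : HasDerivAt (fun t:ℝ => t/(M:ℝ)) (1/(M:ℝ)) 0 := by
      simpa using (hasDerivAt_id (0:ℝ)).div_const (M:ℝ)
    have h2 := hW0'.add (hc.smul hLW0')
    rw [hV1def]
    convert h2 using 1
    · rfl
    rw [hW00, ← hu]
    module
  have hLV1' : HasDerivAt (fun t => L (V1 t)) ((θ + 1/(M:ℝ)) • D u) 0 := by
    have := (hV10 ▸ hDa).comp_hasDerivAt 0 hV1'
    simpa [Function.comp_def, map_smul] using this
  have hg' : HasDerivAt g 0 0 := by
    have hs2 : β/2 + (1/(4*(M:ℝ)))*(θ + (θ + 1/(M:ℝ))) = 0 := by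
      rw [hβ, hθhat, hγhat, hθ]; field_simp; ring
    have h2 := ((hasDerivAt_const (0:ℝ) (α • u)).add
      (((hasDerivAt_const (0:ℝ) u).add hLW1').const_smul (β/2))).add
      ((hLW0'.add hLV1').const_smul (1/(4*(M:ℝ))))
    rw [hgdef]
    convert h2 using 1
    · rfl
    match_scalars
    linear_combination -hs2
  obtain ⟨C, hC, hbound⟩ := quad_bound g cg hg0 hg'.deriv
  refine ⟨C, hC, 1, one_pos, fun t ht => ?_⟩
  rw [key t]
  rw [norm_smul, Real.norm_eq_abs]
  calc |t| * ‖g t‖ ≤ |t| * (C * t ^ 2) :=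
      mul_le_mul_of_nonneg_left (hbound t ht) (abs_nonneg t)
  _ = C * |t| ^ 3 := by rw [← sq_abs t]; ring
end

section
/- Let θ ≥ 0 and let h₁, h₂ be real numbers with h₁ ≥ 0 and h₂ ≤ 0 (the one-sided difference quotients of a monotone numerical flux). Let r_C and r_D be real numbers with −θ ≤ r_C ≤ 1 and −θ ≤ r_D ≤ 1 (the limiter ratios), and define the incremental coefficients C = −h₂·(1 − r_C) and D = h₁·(1 − r_D). Let λ ≥ 0 satisfy the local CFL condition λ·(h₁ − h₂) ≤ 1/(1+θ), and let α, β be real numbers with 0 ≤ α ≤ λ and 0 ≤ β ≤ λ. Then C ≥ 0, D ≥ 0, and α·D + β·C ≤ 1. -/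
/-- Nonnegativity and CFL bound for the Harten incremental coefficients: for a monotone
flux (`h₁ ≥ 0`, `h₂ ≤ 0`), limiter ratios `r_C, r_D ∈ [−θ, 1]`, and local mesh ratio
`λ ≥ 0` with `λ·(h₁ − h₂) ≤ 1/(1+θ)`, the coefficients `C = −h₂·(1 − r_C)` and
`D = h₁·(1 − r_D)` are nonnegative and satisfy `α·D + β·C ≤ 1` whenever
`0 ≤ α ≤ λ` and `0 ≤ β ≤ λ`. -/
theorem incremental_coefficients_cfl_bound
    (θ h₁ h₂ rC rD lam α β : ℝ)
    (hθ : 0 ≤ θ) (hh₁ : 0 ≤ h₁) (hh₂ : h₂ ≤ 0)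
    (hrC₁ : -θ ≤ rC) (hrC₂ : rC ≤ 1)
    (hrD₁ : -θ ≤ rD) (hrD₂ : rD ≤ 1)
    (hlam : 0 ≤ lam) (hCFL : lam * (h₁ - h₂) ≤ 1 / (1 + θ))
    (hα₁ : 0 ≤ α) (hα₂ : α ≤ lam) (hβ₁ : 0 ≤ β) (hβ₂ : β ≤ lam) :
    0 ≤ -h₂ * (1 - rC) ∧ 0 ≤ h₁ * (1 - rD) ∧
      α * (h₁ * (1 - rD)) + β * (-h₂ * (1 - rC)) ≤ 1 := by
  have hpos : (0:ℝ) < 1 + θ := by linarith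
  refine ⟨by nlinarith, by nlinarith, ?_⟩
  have h1 : α * (h₁ * (1 - rD)) ≤ lam * h₁ * (1 + θ) := by
    have := mul_le_mul hα₂ (mul_le_mul_of_nonneg_left (by linarith : 1 - rD ≤ 1 + θ) hh₁)
      (mul_nonneg hh₁ (by linarith)) hlam
    linarith [this]
  have h2 : β * (-h₂ * (1 - rC)) ≤ lam * (-h₂) * (1 + θ) := by
    have := mul_le_mul hβ₂ (mul_le_mul_of_nonneg_left (by linarith : 1 - rC ≤ 1 + θ) (by linarith : (0:ℝ) ≤ -h₂))
      (mul_nonneg (by linarith) (by linarith)) hlam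
    linarith [this]
  have h3 : (1 + θ) * (lam * (h₁ - h₂)) ≤ 1 := by
    calc (1 + θ) * (lam * (h₁ - h₂)) ≤ (1 + θ) * (1 / (1 + θ)) := by
          exact mul_le_mul_of_nonneg_left hCFL (le_of_lt hpos)
      _ = 1 := mul_one_div_cancel (ne_of_gt hpos)
  nlinarith
end
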